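/- (Normalization of the departure probabilities: every stored message leaves the buffer within the cycle) For every k ∈ {1,…,n} with s'_k > 0, one has Σ over j ∈ {k+1,…,n} with r'_j > 0 of (r'_j / b_{j−1}) · Π over l ∈ ω(j,k) of (1 − r'_l / b_{l−1}) = 1, where ω(j,k) = {l : r'_l > 0, k < l < j}. (Note that b_{j−1} > 0 automatically whenever r'_j > 0, so all the quotients are well defined.) -/

import Mathlib

/-!
STATEMENT 12 (normalization of the departure probabilities: every stored
message leaves the buffer within the cycle). With nonnegative 1-indexed tuples
`s', r'` on `{1,…,n}` satisfying the orthogonality condition `s'_j · r'_j = 0`,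
buffer contents `b_0 = 0`, `b_j = b_{j-1} + s'_j − r'_j` with `b_j ≥ 0` and
`b_n = 0`: for every `k ∈ {1,…,n}` with `s'_k > 0`,
`∑_{j ∈ {k+1,…,n}, r'_j > 0} (r'_j / b_{j−1}) · ∏_{l ∈ ω(j,k)} (1 − r'_l / b_{l−1}) = 1`,
where `ω(j,k) = {l : r'_l > 0, k < l < j}`.
-/

/-- Buffer content `b_j = ∑_{m=1}^{j} (s'_m − r'_m)`, i.e. `b_0 = 0` and
`b_j = b_{j−1} + s'_j − r'_j`. -/
noncomputable def buf (s r : ℕ → ℝ) (j : ℕ) : ℝ :=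
  ∑ m ∈ Finset.Icc 1 j, (s m - r m)

lemma buf_step (s r : ℕ → ℝ) (j : ℕ) (hj : 1 ≤ j) :
    buf s r j = buf s r (j - 1) + (s j - r j) := by
  obtain ⟨m, rfl⟩ : ∃ m, j = m + 1 := ⟨j - 1, by omega⟩
  unfold buf
  rw [Finset.sum_Icc_succ_top (by omega)]
  simp

lemma buf_diff (s r : ℕ → ℝ) (a b : ℕ) (hab : a ≤ b) :
    buf s r b = buf s r a + ∑ m ∈ Finset.Ioc a b, (s m - r m) := by
  have h : ∀ j : ℕ, Finset.Icc 1 j = Finset.Ioc 0 j := by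
    intro j; ext x; simp [Nat.lt_iff_add_one_le]
  unfold buf
  rw [h, h, Finset.sum_Ioc_consecutive _ (Nat.zero_le a) hab]

/-- Telescoping identity. -/
lemma telescope (f : ℕ → ℝ) (T : Finset ℕ) :
    ∑ j ∈ T, f j * ∏ l ∈ T.filter (· < j), (1 - f l)
      = 1 - ∏ l ∈ T, (1 - f l) := by
  induction T using Finset.induction_on_max with
  | empty => simp
  | insert a t ha ih =>
    have hat : a ∉ t := fun h => lt_irrefl a (ha a h)
    rw [Finset.sum_insert hat, Finset.prod_insert hat]
    have h1 : (insert a t).filter (· < a) = t := by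
      rw [Finset.filter_insert]
      simp only [lt_irrefl, if_false]
      exact Finset.filter_true_of_mem fun x hx => ha x hx
    have h2 : ∀ j ∈ t, (insert a t).filter (· < j) = t.filter (· < j) := by
      intro j hj
      rw [Finset.filter_insert]
      have : ¬ a < j := not_lt.mpr (le_of_lt (ha j hj))
      simp [this]
    rw [h1, Finset.sum_congr rfl fun j hj => by rw [h2 j hj], ih]
    ring

theorem departure_probabilities_sum_to_one (n : ℕ) (hn : 2 ≤ n) (s r : ℕ → ℝ)
    (hs : ∀ j ∈ Finset.Icc 1 n, 0 ≤ s j) (hr : ∀ j ∈ Finset.Icc 1 n, 0 ≤ r j)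
    (horth : ∀ j ∈ Finset.Icc 1 n, s j * r j = 0)
    (hbuf : ∀ j ∈ Finset.Icc 1 n, 0 ≤ buf s r j) (hbufn : buf s r n = 0)
    (k : ℕ) (hk : k ∈ Finset.Icc 1 n) (hsk : 0 < s k) :
    ∑ j ∈ (Finset.Ioc k n).filter (fun j => 0 < r j),
      (r j / buf s r (j - 1)) *
        ∏ l ∈ (Finset.Ioo k j).filter (fun l => 0 < r l),
          (1 - r l / buf s r (l - 1)) = 1 := by
  simp only [Finset.mem_Icc] at hk
  obtain ⟨hk1, hkn⟩ := hk
  set f : ℕ → ℝ := fun j => r j / buf s r (j - 1) with hf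
  set T : Finset ℕ := (Finset.Ioc k n).filter (fun j => 0 < r j) with hT
  have buf_nonneg : ∀ j, j ≤ n → 0 ≤ buf s r j := by
    intro j hj
    rcases Nat.eq_zero_or_pos j with h | h
    · subst h; simp [buf]
    · exact hbuf j (Finset.mem_Icc.mpr ⟨h, hj⟩)
  -- r k = 0
  have hrk : r k = 0 := by
    rcases mul_eq_zero.mp (horth k (Finset.mem_Icc.mpr ⟨hk1, hkn⟩)) with h | h
    · linarith
    · exact h
  -- buf k > 0
  have hbk : 0 < buf s r k := by
    have := buf_step s r k hk1
    have h0 : 0 ≤ buf s r (k - 1) := buf_nonneg _ (by omega)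
    rw [this, hrk]; linarith
  -- monotone where r vanishes
  have buf_le : ∀ a b : ℕ, a ≤ b → b ≤ n → (∀ l, a < l → l ≤ b → r l = 0) →
      buf s r a ≤ buf s r b := by
    intro a b hab hbn h0
    rw [buf_diff s r a b hab]
    have : 0 ≤ ∑ m ∈ Finset.Ioc a b, (s m - r m) := by
      apply Finset.sum_nonneg
      intro m hm
      simp only [Finset.mem_Ioc] at hm
      have : r m = 0 := h0 m hm.1 hm.2
      have hsm : 0 ≤ s m := hs m (Finset.mem_Icc.mpr ⟨by omega, by omega⟩)
      linarith
    linarith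
  -- T nonempty
  have hTne : T.Nonempty := by
    by_contra h
    rw [Finset.not_nonempty_iff_eq_empty] at h
    have h0 : ∀ l, k < l → l ≤ n → r l = 0 := by
      intro l h1 h2
      by_contra hrl
      have hlm : 0 < r l :=
        lt_of_le_of_ne (hr l (Finset.mem_Icc.mpr ⟨by omega, h2⟩)) (Ne.symm hrl)
      have : l ∈ T := by
        rw [hT]; simp [Finset.mem_filter, Finset.mem_Ioc, h1, h2, hlm]
      rw [h] at this; exact absurd this (Finset.notMem_empty l)
    have := buf_le k n hkn le_rfl h0
    rw [hbufn] at this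
    linarith
  set J := T.max' hTne with hJ
  have hJT : J ∈ T := T.max'_mem hTne
  have hJprop : k < J ∧ J ≤ n ∧ 0 < r J := by
    have := hJT
    rw [hT, Finset.mem_filter, Finset.mem_Ioc] at this
    exact ⟨this.1.1, this.1.2, this.2⟩
  obtain ⟨hkJ, hJn, hrJ⟩ := hJprop
  -- r vanishes after J
  have hafter : ∀ l, J < l → l ≤ n → r l = 0 := by
    intro l h1 h2
    by_contra hrl
    have hlm : 0 < r l :=
      lt_of_le_of_ne (hr l (Finset.mem_Icc.mpr ⟨by omega, h2⟩)) (Ne.symm hrl)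
    have hlT : l ∈ T := by
      rw [hT]; simp [Finset.mem_filter, Finset.mem_Ioc, h2, hlm]; omega
    have := T.le_max' l hlT
    omega
  -- buf J = 0
  have hbJ : buf s r J = 0 := by
    have h1 := buf_le J n hJn le_rfl hafter
    have h2 := buf_nonneg J hJn
    rw [hbufn] at h1
    linarith
  -- s J = 0
  have hsJ : s J = 0 := by
    rcases mul_eq_zero.mp (horth J (Finset.mem_Icc.mpr ⟨by omega, hJn⟩)) with h | h
    · exact h
    · linarith
  -- buf (J-1) = r J
  have hbJ1 : buf s r (J - 1) = r J := by
    have := buf_step s r J (by omega)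
    rw [hbJ, hsJ] at this
    linarith
  -- f J = 1
  have hfJ : 1 - f J = 0 := by
    rw [hf]; simp only
    rw [hbJ1, div_self (ne_of_gt hrJ)]
    ring
  -- rewrite inner products
  have hsets : ∀ j ∈ T, (Finset.Ioo k j).filter (fun l => 0 < r l)
      = T.filter (· < j) := by
    intro j hj
    rw [hT, Finset.mem_filter, Finset.mem_Ioc] at hj
    ext l
    rw [hT]
    simp only [Finset.mem_filter, Finset.mem_Ioo, Finset.mem_Ioc]
    constructor
    · rintro ⟨⟨h1, h2⟩, h3⟩; exact ⟨⟨⟨h1, by omega⟩, h3⟩, h2⟩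
    · rintro ⟨⟨⟨h1, _⟩, h3⟩, h4⟩; exact ⟨⟨h1, h4⟩, h3⟩
  calc ∑ j ∈ T, (r j / buf s r (j - 1)) *
        ∏ l ∈ (Finset.Ioo k j).filter (fun l => 0 < r l), (1 - r l / buf s r (l - 1))
      = ∑ j ∈ T, f j * ∏ l ∈ T.filter (· < j), (1 - f l) := by
        refine Finset.sum_congr rfl fun j hj => ?_
        rw [hsets j hj]
    _ = 1 - ∏ l ∈ T, (1 - f l) := telescope f T
    _ = 1 := by
        rw [Finset.prod_eq_zero hJT hfJ]; ring
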